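/- Suppose every difference γ - γ' of distinct points of Γ makes angle less than θ₀ with the line spanned by P_V e_{j₀}, in the sense that |⟨γ - γ', e_{j₀}⟩| > (√6/3)·|γ - γ'|·cos θ₀. Then for every j ∈ {1,2,3} and all γ, γ' ∈ Γ one has |⟨γ - γ', e_j⟩| ≥ δ₀·|γ - γ'|, where δ₀ = (√6/3)·cos(θ₀ + π/3). -/
import Mathlib

open Real

lemma afd_cos_facts (θ₀ : ℝ) (hθ0 : 0 ≤ θ₀) (hθ6 : θ₀ < Real.pi / 6) :
    0 ≤ Real.cos θ₀ ∧ 0 ≤ Real.sin θ₀ ∧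
    Real.cos (θ₀ + Real.pi / 3) ≤ Real.cos θ₀ ∧
    2 * Real.cos (θ₀ + Real.pi / 3) = Real.cos θ₀ - Real.sqrt 3 * Real.sin θ₀ := by
  have hpi := Real.pi_pos
  refine ⟨Real.cos_nonneg_of_mem_Icc ⟨by linarith, by linarith⟩,
    Real.sin_nonneg_of_nonneg_of_le_pi hθ0 (by linarith),
    Real.cos_le_cos_of_nonneg_of_le_pi hθ0 (by linarith) (by linarith), ?_⟩
  rw [Real.cos_add, Real.cos_pi_div_three, Real.sin_pi_div_three]
  ring

lemma afd_main (θ₀ S a : ℝ) (hθ0 : 0 ≤ θ₀) (hθ6 : θ₀ < Real.pi / 6)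
    (hS : 0 ≤ S)
    (ha : Real.sqrt 6 / 3 * Real.sqrt S * Real.cos θ₀ < |a|) :
    Real.sqrt 6 / 3 * Real.cos (θ₀ + Real.pi / 3) * Real.sqrt S ≤ |a| := by
  obtain ⟨hc, hs, hle, _⟩ := afd_cos_facts θ₀ hθ0 hθ6
  have h6 : 0 ≤ Real.sqrt 6 := Real.sqrt_nonneg 6
  have hS' : 0 ≤ Real.sqrt S := Real.sqrt_nonneg S
  nlinarith [mul_le_mul_of_nonneg_left hle (by positivity : (0:ℝ) ≤ Real.sqrt 6 / 3 * Real.sqrt S)]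

lemma afd_off (θ₀ S a b c : ℝ) (hθ0 : 0 ≤ θ₀) (hθ6 : θ₀ < Real.pi / 6)
    (hsum : a + b + c = 0) (hS : S = a ^ 2 + b ^ 2 + c ^ 2)
    (ha : Real.sqrt 6 / 3 * Real.sqrt S * Real.cos θ₀ < |a|) :
    Real.sqrt 6 / 3 * Real.cos (θ₀ + Real.pi / 3) * Real.sqrt S ≤ |b| := by
  obtain ⟨hc, hs, _, hadd⟩ := afd_cos_facts θ₀ hθ0 hθ6
  set N := Real.sqrt S with hN
  have hN0 : 0 ≤ N := Real.sqrt_nonneg S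
  have hN2 : N ^ 2 = a ^ 2 + b ^ 2 + c ^ 2 := by
    rw [hN, Real.sq_sqrt (by nlinarith : (0:ℝ) ≤ S), hS]
  have h6 : Real.sqrt 6 ^ 2 = 6 := Real.sq_sqrt (by norm_num)
  have h6' : 0 ≤ Real.sqrt 6 := Real.sqrt_nonneg 6
  have h2 : Real.sqrt 2 ^ 2 = 2 := Real.sq_sqrt (by norm_num)
  have h2' : 0 ≤ Real.sqrt 2 := Real.sqrt_nonneg 2
  have h3 : Real.sqrt 3 ^ 2 = 3 := Real.sq_sqrt (by norm_num)
  have h9 : Real.sqrt 9 = 3 := by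
    rw [show (9:ℝ) = 3 ^ 2 by norm_num, Real.sqrt_sq (by norm_num : (0:ℝ) ≤ 3)]
  have h63 : Real.sqrt 6 * Real.sqrt 3 = 3 * Real.sqrt 2 := by
    rw [← Real.sqrt_mul (by norm_num : (0:ℝ) ≤ 6), show (6:ℝ) * 3 = 9 * 2 by norm_num,
      Real.sqrt_mul (by norm_num : (0:ℝ) ≤ 9), h9]
  -- square the hypothesis
  have ha2 : 2 / 3 * N ^ 2 * Real.cos θ₀ ^ 2 < a ^ 2 := by
    have h0 : 0 ≤ Real.sqrt 6 / 3 * N * Real.cos θ₀ := by positivity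
    nlinarith [sq_abs a, ha]
  have hcs : Real.sin θ₀ ^ 2 = 1 - Real.cos θ₀ ^ 2 := by
    have := Real.sin_sq_add_cos_sq θ₀; linarith
  have hc2 : c = -a - b := by linarith
  rw [hc2] at hN2
  have e1 : (a + 2 * b) ^ 2 = 2 * N ^ 2 - 3 * a ^ 2 := by linear_combination (-2 : ℝ) * hN2
  have e2 : (Real.sqrt 2 * N * Real.sin θ₀) ^ 2 = 2 * N ^ 2 - 2 * N ^ 2 * Real.cos θ₀ ^ 2 := by
    rw [mul_pow, mul_pow, h2, hcs]; ring
  have hkey : (a + 2 * b) ^ 2 ≤ (Real.sqrt 2 * N * Real.sin θ₀) ^ 2 := by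
    rw [e1, e2]; linarith
  have habs : |a + 2 * b| ≤ Real.sqrt 2 * N * Real.sin θ₀ := by
    have h0 : 0 ≤ Real.sqrt 2 * N * Real.sin θ₀ := by positivity
    calc |a + 2 * b| = Real.sqrt ((a + 2 * b) ^ 2) := (Real.sqrt_sq_eq_abs _).symm
      _ ≤ Real.sqrt ((Real.sqrt 2 * N * Real.sin θ₀) ^ 2) := Real.sqrt_le_sqrt hkey
      _ = Real.sqrt 2 * N * Real.sin θ₀ := Real.sqrt_sq h0
  have htri : |a| ≤ |a + 2 * b| + 2 * |b| := by
    calc |a| = |(a + 2 * b) + (-2) * b| := by ring_nf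
    _ ≤ |a + 2 * b| + |(-2) * b| := abs_add_le _ _
    _ = |a + 2 * b| + 2 * |b| := by rw [abs_mul]; norm_num
  have hL : Real.sqrt 6 / 3 * Real.cos (θ₀ + Real.pi / 3) * N
      = (Real.sqrt 6 / 3 * N * Real.cos θ₀ - Real.sqrt 2 * N * Real.sin θ₀) / 2 := by
    linear_combination (Real.sqrt 6 * N / 6) * hadd - (N * Real.sin θ₀ / 6) * h63
  rw [hL]
  linarith

theorem away_from_degenerate_directions (θ₀ : ℝ) (hθ0 : 0 ≤ θ₀)
    (hθ6 : θ₀ < Real.pi / 6) (j₀ : Fin 3)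
    (Γ : Set (EuclideanSpace ℝ (Fin 3)))
    (hΓV : Γ ⊆ {ξ : EuclideanSpace ℝ (Fin 3) | ξ 0 + ξ 1 + ξ 2 = 0})
    (hcone : ∀ γ ∈ Γ, ∀ γ' ∈ Γ, γ ≠ γ' →
      Real.sqrt 6 / 3 * ‖γ - γ'‖ * Real.cos θ₀ < |(γ - γ') j₀|) :
    ∀ j : Fin 3, ∀ γ ∈ Γ, ∀ γ' ∈ Γ,
      Real.sqrt 6 / 3 * Real.cos (θ₀ + Real.pi / 3) * ‖γ - γ'‖ ≤ |(γ - γ') j| := by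
  intro j γ hγ γ' hγ'
  by_cases hne : γ = γ'
  · subst hne
    simp
  · have ha := hcone γ hγ γ' hγ' hne
    have h1 := hΓV hγ
    have h2 := hΓV hγ'
    simp only [Set.mem_setOf_eq] at h1 h2
    have hsum : (γ - γ') 0 + (γ - γ') 1 + (γ - γ') 2 = 0 := by
      simp only [PiLp.sub_apply]; linarith
    have hnorm : ‖γ - γ'‖ =
        Real.sqrt (((γ-γ') 0) ^ 2 + ((γ-γ') 1) ^ 2 + ((γ-γ') 2) ^ 2) := by
      rw [EuclideanSpace.norm_eq]
      congr 1
      simp [Fin.sum_univ_three, sq_abs]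
    rw [hnorm] at ha ⊢
    set a0 := (γ - γ') 0 with ha0
    set a1 := (γ - γ') 1 with ha1
    set a2 := (γ - γ') 2 with ha2
    set S := a0 ^ 2 + a1 ^ 2 + a2 ^ 2 with hS
    have hSperm1 : S = a1 ^ 2 + a0 ^ 2 + a2 ^ 2 := by rw [hS]; ring
    have hSperm2 : S = a2 ^ 2 + a0 ^ 2 + a1 ^ 2 := by rw [hS]; ring
    fin_cases j <;> fin_cases j₀ <;> simp only at ha ⊢
    · exact afd_main θ₀ S _ hθ0 hθ6 (by positivity) ha
    · exact afd_off θ₀ S a1 a0 a2 hθ0 hθ6 (by linarith) hSperm1 ha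
    · exact afd_off θ₀ S a2 a0 a1 hθ0 hθ6 (by linarith) hSperm2 ha
    · exact afd_off θ₀ S a0 a1 a2 hθ0 hθ6 (by linarith) hS ha
    · exact afd_main θ₀ S _ hθ0 hθ6 (by positivity) ha
    · exact afd_off θ₀ S a2 a1 a0 hθ0 hθ6 (by linarith) (by rw [hS]; ring) ha
    · exact afd_off θ₀ S a0 a2 a1 hθ0 hθ6 (by linarith) (by rw [hS]; ring) ha
    · exact afd_off θ₀ S a1 a2 a0 hθ0 hθ6 (by linarith) (by rw [hS]; ring) ha
    · exact afd_main θ₀ S _ hθ0 hθ6 (by positivity) ha
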